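/- Let Θ be a subinterval of ℝ, let g : [0,∞) × Θ → ℝ be such that ∂g/∂θ(x,t) exists and is nondecreasing in x for each t, and such that g(x,θ̂) − g(x,θ) = ∫_θ^{θ̂} ∂g/∂θ(x,t) dt for all x and all θ ≤ θ̂ in Θ. Let ψ : [0,∞) → ℝ ∪ {+∞} and set v(θ) = sup_{x ≥ 0} (g(x,θ) − ψ(x)). Suppose θ̂ ∈ Θ and x̂ ≥ 0 are such that v(θ̂) = g(x̂,θ̂) − ψ(x̂). Then for every θ ∈ Θ with θ < θ̂: (i) g(x̂,θ) − ψ(x̂) ≥ g(x,θ) − ψ(x) for all x > x̂, so that sup_{x ≥ 0}(g(x,θ) − ψ(x)) = sup_{0 ≤ x ≤ x̂}(g(x,θ) − ψ(x)); and (ii) if in addition x ↦ g(x,θ) − ψ(x) is upper semicontinuous on [0,x̂], then this supremum is attained, i.e. there exists x' ∈ [0,x̂] with v(θ) = g(x',θ) − ψ(x'). Consequently, the set of θ ∈ Θ at which the supremum defining v(θ) is attained is an interval containing all points of Θ below any point of attainment. -/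

import Mathlib

open Set MeasureTheory intervalIntegral

lemma usc_exists_max {K : Set ℝ} (hK : IsCompact K) (hne : K.Nonempty) {f : ℝ → EReal}
    (hf : UpperSemicontinuousOn f K) : ∃ x ∈ K, ∀ y ∈ K, f y ≤ f x := by
  by_contra h
  push_neg at h
  set M : EReal := ⨆ y ∈ K, f y with hM
  have hlt : ∀ x ∈ K, f x < M := by
    intro x hx
    obtain ⟨y, hy, hxy⟩ := h x hx
    exact lt_of_lt_of_le hxy (le_iSup₂ (f := fun y _ => f y) y hy)
  have hc : ∀ x ∈ K, ∃ c : EReal, f x < c ∧ c < M := fun x hx => exists_between (hlt x hx)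
  choose! c hc1 hc2 using hc
  have hu : ∀ x ∈ K, ∃ u : Set ℝ, u ∈ nhds x ∧ ∀ z ∈ u ∩ K, f z < c x := by
    intro x hx
    have := hf x hx (c x) (hc1 x hx)
    rw [eventually_nhdsWithin_iff] at this
    obtain ⟨u, hu1, hu2, hu3⟩ := eventually_nhds_iff.1 this
    exact ⟨u, hu2.mem_nhds hu3, fun z hz => hu1 z hz.1 hz.2⟩
  choose! u hu1 hu2 using hu
  obtain ⟨t, ht⟩ := hK.elim_nhds_subcover' (fun x hx => u x) (fun x hx => hu1 x hx)
  obtain ⟨x0, hx0⟩ := hne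
  have htne : t.Nonempty := by
    by_contra hte
    rw [Finset.not_nonempty_iff_eq_empty] at hte
    have := ht hx0
    simp [hte] at this
  set C : EReal := t.sup' htne fun x => c x with hC
  have hCM : C < M := by
    rw [hC, Finset.sup'_lt_iff]
    exact fun x _ => hc2 x x.2
  have hMC : M ≤ C := by
    apply iSup₂_le
    intro z hz
    obtain ⟨x, hxt, hxz⟩ := mem_iUnion₂.1 (ht hz)
    rw [hC]
    exact le_trans (hu2 x x.2 z ⟨hxz, hz⟩).le (Finset.le_sup' (fun x : K => c x) hxt)
  exact absurd (hMC.trans_lt hCM) (lt_irrefl M)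

/-- Suppose `∂g/∂θ(x,·)` exists (within `Θ`), is nondecreasing in `x ≥ 0` for each
`t ∈ Θ`, and `g(x,θ') - g(x,θ) = ∫_θ^θ' ∂g/∂θ(x,t) dt`. Let
`v(θ) = sup_{x ≥ 0}(g(x,θ) - ψ(x))`, and suppose the supremum for `θh ∈ Θ` is attained
at `xh ≥ 0`.  Then for every `θ ∈ Θ` with `θ < θh`:
(i) `g(xh,θ) - ψ(xh) ≥ g(x,θ) - ψ(x)` for all `x > xh`, so the supremum over `x ≥ 0`
equals the supremum over `[0,xh]`; and (ii) if `x ↦ g(x,θ) - ψ(x)` is upper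
semicontinuous on `[0,xh]`, the supremum is attained at some `x' ∈ [0,xh]`. -/
theorem attainment_set_is_interval
    (Θ : Set ℝ) (hΘ : Θ.Nonempty) (hΘI : Θ.OrdConnected)
    (g gθ : ℝ → ℝ → ℝ)
    (hderiv : ∀ x ∈ Ici (0:ℝ), ∀ t ∈ Θ, HasDerivWithinAt (fun t' => g x t') (gθ x t) Θ t)
    (hmono : ∀ t ∈ Θ, MonotoneOn (fun x => gθ x t) (Ici 0))
    (hint : ∀ x ∈ Ici (0:ℝ), ∀ θ ∈ Θ, ∀ θ' ∈ Θ, θ ≤ θ' →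
      g x θ' - g x θ = ∫ t in θ..θ', gθ x t)
    (ψ : ℝ → EReal) (v : ℝ → EReal)
    (hv : ∀ θ ∈ Θ, v θ = ⨆ x ∈ Ici (0:ℝ), ((g x θ : EReal) - ψ x))
    (θh : ℝ) (hθh : θh ∈ Θ) (xh : ℝ) (hxh : 0 ≤ xh)
    (hatt : v θh = (g xh θh : EReal) - ψ xh) :
    ∀ θ ∈ Θ, θ < θh →
      ((∀ x : ℝ, xh < x → (g x θ : EReal) - ψ x ≤ (g xh θ : EReal) - ψ xh) ∧
       (⨆ x ∈ Ici (0:ℝ), ((g x θ : EReal) - ψ x))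
          = ⨆ x ∈ Icc (0:ℝ) xh, ((g x θ : EReal) - ψ x) ∧
       (UpperSemicontinuousOn (fun x => (g x θ : EReal) - ψ x) (Icc 0 xh) →
         ∃ x' ∈ Icc (0:ℝ) xh, v θ = (g x' θ : EReal) - ψ x')) := by
  intro θ hθ hθlt
  have hconv : Convex ℝ Θ := hΘI.convex
  -- key real inequality
  have key : ∀ x : ℝ, xh ≤ x → g xh θh - g xh θ ≤ g x θh - g x θ := by
    intro x hxhx
    have hx0 : x ∈ Ici (0:ℝ) := le_trans hxh hxhx
    have hmonoh : MonotoneOn (fun t => g x t - g xh t) Θ := by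
      apply monotoneOn_of_hasDerivWithinAt_nonneg hconv
        (f' := fun t => gθ x t - gθ xh t)
      · intro t ht
        exact ((hderiv x hx0 t ht).sub (hderiv xh hxh t ht)).continuousWithinAt
      · intro t ht
        exact (((hderiv x hx0 t (interior_subset ht)).sub
          (hderiv xh hxh t (interior_subset ht))).mono interior_subset)
      · intro t ht
        have := hmono t (interior_subset ht) hxh hx0 hxhx
        simpa [sub_nonneg] using this
    have := hmonoh hθ hθh hθlt.le
    simp only at this
    linarith
  -- part 1
  have part1 : ∀ x : ℝ, xh < x → (g x θ : EReal) - ψ x ≤ (g xh θ : EReal) - ψ xh := by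
    intro x hlt
    have hx0 : x ∈ Ici (0:ℝ) := hxh.trans hlt.le
    have hsup : (g x θh : EReal) - ψ x ≤ (g xh θh : EReal) - ψ xh := by
      rw [← hatt, hv θh hθh]
      exact le_iSup₂ (f := fun x _ => (g x θh : EReal) - ψ x) x hx0
    by_cases hb : ψ xh = ⊥
    · rw [hb, EReal.coe_sub_bot]; exact le_top
    by_cases htop : ψ xh = ⊤
    · rw [htop, EReal.sub_top] at hsup ⊢
      have hxt : ψ x = ⊤ := by
        rw [le_bot_iff, sub_eq_add_neg, EReal.add_eq_bot_iff] at hsup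
        rcases hsup with h | h
        · exact absurd h (EReal.coe_ne_bot _)
        · simpa using h
      rw [hxt, EReal.sub_top]
    obtain ⟨r, hr⟩ : ∃ r : ℝ, ψ xh = (r : EReal) :=
      ⟨(ψ xh).toReal, (EReal.coe_toReal htop hb).symm⟩
    rw [hr] at hsup ⊢
    by_cases hxb : ψ x = ⊥
    · rw [hxb, EReal.coe_sub_bot, top_le_iff, ← EReal.coe_sub] at hsup
      exact absurd hsup.symm (Ne.symm (EReal.coe_ne_top _))
    by_cases hxt : ψ x = ⊤
    · rw [hxt, EReal.sub_top]; exact bot_le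
    obtain ⟨s, hs⟩ : ∃ s : ℝ, ψ x = (s : EReal) :=
      ⟨(ψ x).toReal, (EReal.coe_toReal hxt hxb).symm⟩
    rw [hs] at hsup ⊢
    rw [← EReal.coe_sub, ← EReal.coe_sub] at hsup ⊢
    rw [EReal.coe_le_coe_iff] at hsup ⊢
    have := key x hlt.le
    linarith
  -- part 2
  have part2 : (⨆ x ∈ Ici (0:ℝ), ((g x θ : EReal) - ψ x))
      = ⨆ x ∈ Icc (0:ℝ) xh, ((g x θ : EReal) - ψ x) := by
    apply le_antisymm
    · apply iSup₂_le
      intro x hx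
      rcases le_or_gt x xh with h | h
      · exact le_iSup₂ (f := fun x _ => (g x θ : EReal) - ψ x) x ⟨hx, h⟩
      · exact (part1 x h).trans
          (le_iSup₂ (f := fun x _ => (g x θ : EReal) - ψ x) xh ⟨hxh, le_rfl⟩)
    · apply iSup₂_le
      intro x hx
      exact le_iSup₂ (f := fun x _ => (g x θ : EReal) - ψ x) x hx.1
  refine ⟨part1, part2, ?_⟩
  -- part 3
  intro husc
  obtain ⟨x', hx', hmax⟩ := usc_exists_max isCompact_Icc (nonempty_Icc.2 hxh) husc
  refine ⟨x', hx', ?_⟩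
  rw [hv θ hθ, part2]
  exact le_antisymm (iSup₂_le hmax)
    (le_iSup₂ (f := fun x _ => (g x θ : EReal) - ψ x) x' hx')
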